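/- Assume the set of Matchings generated by D₁ and D₂ is infinite. Then closure( ⋃_{w∈D} φ_w(K₁+K₂) ) = K₁+K₂, where D is the set of primitive Matchings and φ_w is the similitude associated to the Matching w. -/

import Mathlib

open Finset Pointwise

/-- The block `(0,…,0, β^k * a)` of length `k` associated to the similitude
`x ↦ x/β^k + a`. -/
noncomputable def digitBlock (β : ℝ) (k : ℕ) (a : ℝ) : List ℝ :=
  List.replicate (k - 1) 0 ++ [β ^ k * a]

/-- `w` is a Matching generated by the digital sets `P` and `Q`: it is the coordinatewise
sum of a concatenation of blocks from `P` and a concatenation of blocks from `Q`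
having the same total length as `w`. -/
def IsMatching {n m : ℕ} (P : Fin n → List ℝ) (Q : Fin m → List ℝ) (w : List ℝ) : Prop :=
  ∃ (is : List (Fin n)) (js : List (Fin m)),
    is ≠ [] ∧ js ≠ [] ∧
    (is.map P).flatten.length = w.length ∧
    (js.map Q).flatten.length = w.length ∧
    w = List.zipWith (· + ·) (is.map P).flatten (js.map Q).flatten

/-- A Matching is primitive if it is not a concatenation of two or more shorter Matchings. -/
def IsPrimMatching {n m : ℕ} (P : Fin n → List ℝ) (Q : Fin m → List ℝ) (w : List ℝ) : Prop :=
  IsMatching P Q w ∧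
    ¬ ∃ u v : List ℝ, u ≠ [] ∧ v ≠ [] ∧ IsMatching P Q u ∧ IsMatching P Q v ∧ w = u ++ v

/-- The value `Σ_{i=1}^{L} c_i β^{-i}` of the block `w = (c_1,…,c_L)` in base `β`. -/
noncomputable def blockVal (β : ℝ) (w : List ℝ) : ℝ :=
  ∑ i : Fin w.length, w.get i / β ^ (i.1 + 1)

/-- The similitude `φ_w(x) = x/β^{|w|} + Σ_i c_i β^{-i}` associated to a block `w`. -/
noncomputable def phiBlock (β : ℝ) (w : List ℝ) (x : ℝ) : ℝ :=
  x / β ^ w.length + blockVal β w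

/-- `x : ℕ → ℝ` (indexed from 0, representing `(x_k)_{k ≥ 1}`) is the infinite
concatenation of the nonempty blocks `W 0, W 1, …`. -/
def IsConcatSeq (W : ℕ → List ℝ) (x : ℕ → ℝ) : Prop :=
  (∀ t, W t ≠ []) ∧
    ∀ (t : ℕ) (i : Fin (W t).length),
      x ((∑ s ∈ Finset.range t, (W s).length) + i) = (W t).get i

/-- `x` is an infinite concatenation of blocks from the family `Ws`. -/
def IsInfConcatFrom (Ws : Set (List ℝ)) (x : ℕ → ℝ) : Prop :=
  ∃ W : ℕ → List ℝ, (∀ t, W t ∈ Ws) ∧ IsConcatSeq W x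

/-- The value `Σ_{k=1}^{∞} x_k β^{-k}` of a sequence (indexed from 0). -/
noncomputable def seqVal (β : ℝ) (x : ℕ → ℝ) : ℝ :=
  ∑' k : ℕ, x k / β ^ (k + 1)

/-- The set `E` of values of infinite concatenations of Matchings. -/
def Eset {n m : ℕ} (β : ℝ) (P : Fin n → List ℝ) (Q : Fin m → List ℝ) : Set ℝ :=
  {z | ∃ x : ℕ → ℝ, IsInfConcatFrom {w | IsMatching P Q w} x ∧ z = seqVal β x}

/-- `a` is a coding: the coordinatewise sum of an infinite concatenation of blocks from
`P` and an infinite concatenation of blocks from `Q`. -/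
def IsCoding {n m : ℕ} (P : Fin n → List ℝ) (Q : Fin m → List ℝ) (a : ℕ → ℝ) : Prop :=
  ∃ x y : ℕ → ℝ, IsInfConcatFrom (Set.range P) x ∧ IsInfConcatFrom (Set.range Q) y ∧
    ∀ k, a k = x k + y k

/-- The set `C` of codings having a tail containing no segment that is a Matching. -/
def Cset {n m : ℕ} (P : Fin n → List ℝ) (Q : Fin m → List ℝ) : Set (ℕ → ℝ) :=
  {a | IsCoding P Q a ∧
    ∃ N : ℕ, ∀ j ≥ N, ∀ l : ℕ, 1 ≤ l →
      ¬ IsMatching P Q (List.ofFn fun i : Fin l => a (j + i))}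


-- ===== auxiliary lemmas =====

lemma blockVal_nil (β : ℝ) : blockVal β [] = 0 := by simp [blockVal]

lemma blockVal_cons (β c : ℝ) (w : List ℝ) :
    blockVal β (c :: w) = c / β + blockVal β w / β := by
  have h0 : blockVal β (c :: w) = ∑ i : Fin (w.length + 1), (c :: w).get i / β ^ (i.1 + 1) := rfl
  rw [h0, Fin.sum_univ_succ]
  unfold blockVal
  rw [Finset.sum_div]
  congr 1
  · norm_num
  · refine Finset.sum_congr rfl fun i _ => ?_
    rw [div_div, ← pow_succ]
    rfl

lemma blockVal_append (β : ℝ) (u v : List ℝ) :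
    blockVal β (u ++ v) = blockVal β u + blockVal β v / β ^ u.length := by
  induction u with
  | nil => simp [blockVal_nil]
  | cons c u ih =>
      simp only [List.cons_append, blockVal_cons, ih, List.length_cons, pow_succ]
      ring

lemma blockVal_zipWith (β : ℝ) :
    ∀ u v : List ℝ, u.length = v.length →
      blockVal β (List.zipWith (· + ·) u v) = blockVal β u + blockVal β v := by
  intro u
  induction u with
  | nil =>
      intro v h
      obtain rfl : v = [] := (List.length_eq_zero_iff.mp h.symm)
      simp [blockVal_nil]
  | cons c u ih =>
      intro v h
      cases v with
      | nil => simp at h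
      | cons d v =>
          simp only [List.zipWith_cons_cons, blockVal_cons, ih v (by simpa using h)]
          ring

lemma blockVal_rep (β c : ℝ) : ∀ j : ℕ, blockVal β (List.replicate j 0 ++ [c]) = c / β ^ (j+1) := by
  intro j
  induction j with
  | zero => simp [blockVal_cons, blockVal_nil]
  | succ j ih =>
      rw [List.replicate_succ, List.cons_append, blockVal_cons, ih]
      rw [pow_succ]
      ring

lemma length_digitBlock {k : ℕ} (hk : 0 < k) (β a : ℝ) : (digitBlock β k a).length = k := by
  simp [digitBlock]; omega

lemma blockVal_digitBlock {β : ℝ} (hβ : β ≠ 0) {k : ℕ} (hk : 0 < k) (a : ℝ) :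
    blockVal β (digitBlock β k a) = a := by
  rw [digitBlock, blockVal_rep, Nat.sub_add_cancel hk]
  field_simp

lemma phiBlock_nil (β x : ℝ) : phiBlock β [] x = x := by
  simp [phiBlock, blockVal_nil]

lemma phiBlock_append (β : ℝ) (u v : List ℝ) (x : ℝ) :
    phiBlock β (u ++ v) x = phiBlock β u (phiBlock β v x) := by
  simp only [phiBlock, List.length_append, blockVal_append, pow_add]
  ring

noncomputable def compF {n : ℕ} (β : ℝ) (nv : Fin n → ℕ) (a : Fin n → ℝ) : List (Fin n) → ℝ → ℝ
  | [], x => x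
  | i :: is, x => compF β nv a is x / β ^ nv i + a i

section Aux

variable {n m : ℕ} {β : ℝ} {nv : Fin n → ℕ} {a : Fin n → ℝ} {mv : Fin m → ℕ} {b : Fin m → ℝ}

lemma compF_append (l₁ l₂ : List (Fin n)) (x : ℝ) :
    compF β nv a (l₁ ++ l₂) x = compF β nv a l₁ (compF β nv a l₂ x) := by
  induction l₁ with
  | nil => rfl
  | cons i l ih => simp [compF, ih]

lemma compF_sub (is : List (Fin n)) (x x' : ℝ) :
    compF β nv a is x - compF β nv a is x' = (x - x') / β ^ (is.map nv).sum := by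
  induction is with
  | nil => simp [compF]
  | cons i l ih =>
      simp only [compF, List.map_cons, List.sum_cons, add_sub_add_right_eq_sub, ← sub_div, ih,
        div_div, ← pow_add]
      ring_nf

lemma compF_mem {K : Set ℝ} (hK : K = ⋃ i : Fin n, (fun x => x / β ^ nv i + a i) '' K)
    (is : List (Fin n)) {x : ℝ} (hx : x ∈ K) : compF β nv a is x ∈ K := by
  induction is with
  | nil => exact hx
  | cons i l ih =>
      have hsub : (fun x => x / β ^ nv i + a i) '' K ⊆ K := by
        conv_rhs => rw [hK]
        exact Set.subset_iUnion (fun j => (fun x => x / β ^ nv j + a j) '' K) i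
      exact hsub (Set.mem_image_of_mem _ ih)

lemma len_flatten_map (hnv : ∀ i, 0 < nv i) (is : List (Fin n)) :
    ((is.map (fun i => digitBlock β (nv i) (a i))).flatten).length = (is.map nv).sum := by
  induction is with
  | nil => simp
  | cons i l ih => simp [List.flatten_cons, ih, length_digitBlock (hnv i)]

lemma compF_phi (hβ : β ≠ 0) (hnv : ∀ i, 0 < nv i) (is : List (Fin n)) (x : ℝ) :
    compF β nv a is x = phiBlock β ((is.map (fun i => digitBlock β (nv i) (a i))).flatten) x := by
  induction is with
  | nil => simp [compF, phiBlock, blockVal_nil]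
  | cons i l ih =>
      simp only [compF, ih, phiBlock, List.map_cons, List.flatten_cons, blockVal_append,
        List.length_append, blockVal_digitBlock hβ (hnv i), length_digitBlock (hnv i), pow_add]
      ring

lemma phi_matching_eq (hβ0 : β ≠ 0) (hnv : ∀ i, 0 < nv i) (hmv : ∀ j, 0 < mv j)
    {w : List ℝ} {is : List (Fin n)} {js : List (Fin m)}
    (h3 : ((is.map (fun i => digitBlock β (nv i) (a i))).flatten).length = w.length)
    (h4 : ((js.map (fun j => digitBlock β (mv j) (b j))).flatten).length = w.length)
    (hw : w = List.zipWith (· + ·) (is.map (fun i => digitBlock β (nv i) (a i))).flatten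
      (js.map (fun j => digitBlock β (mv j) (b j))).flatten)
    (x y : ℝ) :
    phiBlock β w (x + y) = compF β nv a is x + compF β mv b js y := by
  rw [compF_phi hβ0 hnv, compF_phi hβ0 hmv]
  subst hw
  simp only [phiBlock]
  rw [blockVal_zipWith β _ _ (h3.trans h4.symm), h3, h4]
  ring

lemma matching_image (hβ0 : β ≠ 0) (hnv : ∀ i, 0 < nv i) (hmv : ∀ j, 0 < mv j)
    {K₁ K₂ : Set ℝ}
    (hK₁ : K₁ = ⋃ i : Fin n, (fun x => x / β ^ nv i + a i) '' K₁)
    (hK₂ : K₂ = ⋃ j : Fin m, (fun x => x / β ^ mv j + b j) '' K₂)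
    {w : List ℝ}
    (hw : IsMatching (fun i => digitBlock β (nv i) (a i)) (fun j => digitBlock β (mv j) (b j)) w)
    {x y : ℝ} (hx : x ∈ K₁) (hy : y ∈ K₂) :
    phiBlock β w (x + y) ∈ K₁ + K₂ := by
  obtain ⟨is, js, _, _, h3, h4, hweq⟩ := hw
  rw [phi_matching_eq hβ0 hnv hmv h3 h4 hweq]
  exact Set.add_mem_add (compF_mem hK₁ is hx) (compF_mem hK₂ js hy)

lemma sum_ge_length (hnv : ∀ i, 0 < nv i) : ∀ is : List (Fin n), is.length ≤ (is.map nv).sum := by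
  intro is
  induction is with
  | nil => simp
  | cons i l ih =>
      have := hnv i
      simp only [List.map_cons, List.sum_cons, List.length_cons]
      omega

lemma sum_map_flatten_replicate (g : Fin n → ℕ) (l : List (Fin n)) :
    ∀ k, (((List.replicate k l).flatten).map g).sum = k * (l.map g).sum := by
  intro k
  induction k with
  | zero => simp
  | succ k ih =>
      rw [List.replicate_succ, List.flatten_cons, List.map_append, List.sum_append, ih]
      ring

lemma exists_iterate {K : Set ℝ}
    (hK : K = ⋃ i : Fin n, (fun x => x / β ^ nv i + a i) '' K) :
    ∀ (p : ℕ) {x : ℝ}, x ∈ K → ∃ (is : List (Fin n)) (x' : ℝ),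
      is.length = p + 1 ∧ x' ∈ K ∧ x = compF β nv a is x' := by
  intro p
  induction p with
  | zero =>
      intro x hx
      rw [hK] at hx
      obtain ⟨i, x', hx', hxe⟩ := by simpa using hx
      exact ⟨[i], x', rfl, hx', hxe.symm⟩
  | succ p ih =>
      intro x hx
      rw [hK] at hx
      obtain ⟨i, x₁, hx₁, hxe⟩ := by simpa using hx
      obtain ⟨is, x', hl, hx', hxe'⟩ := ih hx₁
      exact ⟨i :: is, x', by simp [hl], hx', by rw [← hxe, hxe']; rfl⟩

end Aux

section Match

variable {n m : ℕ} {P : Fin n → List ℝ} {Q : Fin m → List ℝ}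

lemma IsMatching.app {u v : List ℝ} (hu : IsMatching P Q u) (hv : IsMatching P Q v) :
    IsMatching P Q (u ++ v) := by
  obtain ⟨is₁, js₁, h1, h2, h3, h4, rfl⟩ := hu
  obtain ⟨is₂, js₂, g1, g2, g3, g4, rfl⟩ := hv
  refine ⟨is₁ ++ is₂, js₁ ++ js₂, fun h => h1 (List.append_eq_nil_iff.mp h).1,
    fun h => h2 (List.append_eq_nil_iff.mp h).1, ?_, ?_, ?_⟩
  · simp only [List.map_append, List.flatten_append, List.length_append]
    omega
  · simp only [List.map_append, List.flatten_append, List.length_append]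
    omega
  · simp only [List.map_append, List.flatten_append]
    rw [List.zipWith_append (h3.trans h4.symm)]

lemma exists_prim_prefix :
    ∀ L (w : List ℝ), w.length ≤ L → IsMatching P Q w →
      ∃ w₁ t, IsPrimMatching P Q w₁ ∧ w = w₁ ++ t ∧ (t = [] ∨ IsMatching P Q t) := by
  intro L
  induction L with
  | zero =>
      intro w hl hw
      obtain rfl : w = [] := List.length_eq_zero_iff.mp (Nat.le_zero.mp hl)
      refine ⟨[], [], ⟨hw, ?_⟩, rfl, Or.inl rfl⟩
      rintro ⟨u, v, hu, hv, _, _, heq⟩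
      exact hu (List.append_eq_nil_iff.mp heq.symm).1
  | succ L ih =>
      intro w hl hw
      by_cases hp : IsPrimMatching P Q w
      · exact ⟨w, [], hp, (List.append_nil w).symm, Or.inl rfl⟩
      · have hdec : ∃ u v : List ℝ, u ≠ [] ∧ v ≠ [] ∧ IsMatching P Q u ∧ IsMatching P Q v ∧
            w = u ++ v := by
          by_contra hcon
          exact hp ⟨hw, hcon⟩
        obtain ⟨u, v, hu, hv, hmu, hmv, rfl⟩ := hdec
        have hul : u.length ≤ L := by
          have : 0 < v.length := List.length_pos_iff.mpr hv
          rw [List.length_append] at hl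
          omega
        obtain ⟨w₁, t, hprim, rfl, ht⟩ := ih u hul hmu
        refine ⟨w₁, t ++ v, hprim, by rw [List.append_assoc], Or.inr ?_⟩
        rcases ht with rfl | hmt
        · simpa using hmv
        · exact hmt.app hmv

end Match

/-- if there are infinitely many Matchings, then
`closure( ⋃_{w ∈ D} φ_w(K₁+K₂) ) = K₁+K₂`, where `D` is the set of primitive Matchings. -/
theorem statement4 (β : ℝ) (hβ : 1 < β) (n m : ℕ) (hn : 0 < n) (hm : 0 < m)
    (nv : Fin n → ℕ) (hnv : ∀ i, 0 < nv i) (a : Fin n → ℝ)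
    (mv : Fin m → ℕ) (hmv : ∀ j, 0 < mv j) (b : Fin m → ℝ)
    (K₁ K₂ : Set ℝ)
    (hK₁ne : K₁.Nonempty) (hK₁c : IsCompact K₁)
    (hK₁ : K₁ = ⋃ i : Fin n, (fun x => x / β ^ nv i + a i) '' K₁)
    (hK₂ne : K₂.Nonempty) (hK₂c : IsCompact K₂)
    (hK₂ : K₂ = ⋃ j : Fin m, (fun x => x / β ^ mv j + b j) '' K₂)
    (P : Fin n → List ℝ) (Q : Fin m → List ℝ)
    (hP : P = fun i => digitBlock β (nv i) (a i))
    (hQ : Q = fun j => digitBlock β (mv j) (b j))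
    (hinf : {w : List ℝ | IsMatching P Q w}.Infinite) :
    closure (⋃ w ∈ {w : List ℝ | IsPrimMatching P Q w}, phiBlock β w '' (K₁ + K₂))
      = K₁ + K₂ := by
  subst hP
  subst hQ
  have hβ0 : (0:ℝ) < β := lt_trans zero_lt_one hβ
  have hβne : β ≠ 0 := ne_of_gt hβ0
  apply subset_antisymm
  · refine closure_minimal ?_ (hK₁c.add hK₂c).isClosed
    rintro p hp
    simp only [Set.mem_iUnion, Set.mem_setOf_eq] at hp
    obtain ⟨w, hwprim, q, hq, rfl⟩ := hp
    obtain ⟨x, hx, y, hy, rfl⟩ := Set.mem_add.mp hq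
    exact matching_image hβne hnv hmv hK₁ hK₂ hwprim.1 hx hy
  · intro z hz
    obtain ⟨x, hx, y, hy, hzeq⟩ := Set.mem_add.mp hz
    rw [Metric.mem_closure_iff]
    intro ε hε
    obtain ⟨R₁, hR₁b⟩ := hK₁c.isBounded.subset_closedBall 0
    obtain ⟨R₂, hR₂b⟩ := hK₂c.isBounded.subset_closedBall 0
    have hR₁ : ∀ t ∈ K₁, |t| ≤ R₁ := fun t ht => by
      have := hR₁b ht; rwa [Metric.mem_closedBall, Real.dist_eq, sub_zero] at this
    have hR₂ : ∀ t ∈ K₂, |t| ≤ R₂ := fun t ht => by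
      have := hR₂b ht; rwa [Metric.mem_closedBall, Real.dist_eq, sub_zero] at this
    obtain ⟨N, hN⟩ := pow_unbounded_of_one_lt ((2*R₁ + 2*R₂)/ε) hβ
    obtain ⟨is, x₁, hisl, hx₁, hxe⟩ := exists_iterate hK₁ N hx
    obtain ⟨js, y₁, hjsl, hy₁, hye⟩ := exists_iterate hK₂ N hy
    set A := (is.map nv).sum with hAdef
    set B := (js.map mv).sum with hBdef
    have hA : N + 1 ≤ A := by have := sum_ge_length hnv is; omega
    have hB : N + 1 ≤ B := by have := sum_ge_length hmv js; omega
    have hisne : is ≠ [] := by intro h; rw [h] at hisl; simp at hisl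
    have hjsne : js ≠ [] := by intro h; rw [h] at hjsl; simp at hjsl
    obtain ⟨B', hB'⟩ := Nat.exists_eq_succ_of_ne_zero (show B ≠ 0 by omega)
    obtain ⟨A', hA'⟩ := Nat.exists_eq_succ_of_ne_zero (show A ≠ 0 by omega)
    set IS := (List.replicate B is).flatten with hISdef
    set JS := (List.replicate A js).flatten with hJSdef
    have hISdec : IS = is ++ (List.replicate B' is).flatten := by
      rw [hISdef, hB', List.replicate_succ, List.flatten_cons]
    have hJSdec : JS = js ++ (List.replicate A' js).flatten := by
      rw [hJSdef, hA', List.replicate_succ, List.flatten_cons]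
    have hISne : IS ≠ [] := by
      rw [hISdec]; intro h; exact hisne (List.append_eq_nil_iff.mp h).1
    have hJSne : JS ≠ [] := by
      rw [hJSdec]; intro h; exact hjsne (List.append_eq_nil_iff.mp h).1
    have hISsum : (IS.map nv).sum = B * A := sum_map_flatten_replicate nv is B
    have hJSsum : (JS.map mv).sum = A * B := sum_map_flatten_replicate mv js A
    have hISlen : ((IS.map (fun i => digitBlock β (nv i) (a i))).flatten).length = B * A := by
      rw [len_flatten_map hnv, hISsum]
    have hJSlen : ((JS.map (fun j => digitBlock β (mv j) (b j))).flatten).length = A * B := by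
      rw [len_flatten_map hmv, hJSsum]
    set w := List.zipWith (· + ·) ((IS.map (fun i => digitBlock β (nv i) (a i))).flatten)
      ((JS.map (fun j => digitBlock β (mv j) (b j))).flatten) with hwdef
    have hwl : w.length = B * A := by
      rw [hwdef, List.length_zipWith, hISlen, hJSlen, Nat.mul_comm A B, min_self]
    have h3 : ((IS.map (fun i => digitBlock β (nv i) (a i))).flatten).length = w.length := by
      rw [hISlen, hwl]
    have h4 : ((JS.map (fun j => digitBlock β (mv j) (b j))).flatten).length = w.length := by
      rw [hJSlen, hwl, Nat.mul_comm]
    have hmw : IsMatching (fun i => digitBlock β (nv i) (a i))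
        (fun j => digitBlock β (mv j) (b j)) w := ⟨IS, JS, hISne, hJSne, h3, h4, hwdef⟩
    set x₂ := compF β nv a ((List.replicate B' is).flatten) x₁ with hx₂def
    set y₂ := compF β mv b ((List.replicate A' js).flatten) y₁ with hy₂def
    have hx₂ : x₂ ∈ K₁ := compF_mem hK₁ _ hx₁
    have hy₂ : y₂ ∈ K₂ := compF_mem hK₂ _ hy₁
    have hcompIS : compF β nv a IS x₁ = compF β nv a is x₂ := by
      rw [hISdec, compF_append]
    have hcompJS : compF β mv b JS y₁ = compF β mv b js y₂ := by
      rw [hJSdec, compF_append]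
    have hxd : x - compF β nv a IS x₁ = (x₁ - x₂) / β ^ A := by
      rw [hcompIS, hxe, compF_sub]
    have hyd : y - compF β mv b JS y₁ = (y₁ - y₂) / β ^ B := by
      rw [hcompJS, hye, compF_sub]
    have hxabs : |x - compF β nv a IS x₁| ≤ 2*R₁ / β ^ N := by
      rw [hxd, abs_div, abs_of_pos (pow_pos hβ0 A)]
      refine div_le_div₀ (by linarith [abs_nonneg x₁, hR₁ x₁ hx₁]) ?_ (pow_pos hβ0 N)
        (pow_le_pow_right₀ hβ.le (by omega))
      calc |x₁ - x₂| ≤ |x₁| + |x₂| := abs_sub _ _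
        _ ≤ 2*R₁ := by linarith [hR₁ x₁ hx₁, hR₁ x₂ hx₂]
    have hyabs : |y - compF β mv b JS y₁| ≤ 2*R₂ / β ^ N := by
      rw [hyd, abs_div, abs_of_pos (pow_pos hβ0 B)]
      refine div_le_div₀ (by linarith [abs_nonneg y₁, hR₂ y₁ hy₁]) ?_ (pow_pos hβ0 N)
        (pow_le_pow_right₀ hβ.le (by omega))
      calc |y₁ - y₂| ≤ |y₁| + |y₂| := abs_sub _ _
        _ ≤ 2*R₂ := by linarith [hR₂ y₁ hy₁, hR₂ y₂ hy₂]
    set p := phiBlock β w (x₁ + y₁) with hpdef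
    have hpe : p = compF β nv a IS x₁ + compF β mv b JS y₁ :=
      phi_matching_eq hβne hnv hmv h3 h4 hwdef x₁ y₁
    obtain ⟨w₁, t, hprim, hwdec, ht⟩ := exists_prim_prefix w.length w le_rfl hmw
    have hqmem : phiBlock β t (x₁ + y₁) ∈ K₁ + K₂ := by
      rcases ht with rfl | hmt
      · rw [phiBlock_nil]; exact Set.add_mem_add hx₁ hy₁
      · exact matching_image hβne hnv hmv hK₁ hK₂ hmt hx₁ hy₁
    refine ⟨p, ?_, ?_⟩
    · refine Set.mem_biUnion (show w₁ ∈ {w | IsPrimMatching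
        (fun i => digitBlock β (nv i) (a i)) (fun j => digitBlock β (mv j) (b j)) w}
        from hprim) ?_
      exact ⟨phiBlock β t (x₁ + y₁), hqmem, by rw [hpdef, hwdec, phiBlock_append]⟩
    · have hzp : z - p = (x - compF β nv a IS x₁) + (y - compF β mv b JS y₁) := by
        rw [hpe, ← hzeq]; ring
      rw [Real.dist_eq, hzp]
      calc |(x - compF β nv a IS x₁) + (y - compF β mv b JS y₁)|
          ≤ |x - compF β nv a IS x₁| + |y - compF β mv b JS y₁| := abs_add_le _ _
        _ ≤ 2*R₁ / β ^ N + 2*R₂ / β ^ N := add_le_add hxabs hyabs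
        _ = (2*R₁ + 2*R₂) / β ^ N := by ring
        _ < ε := by
            rw [div_lt_iff₀ (pow_pos hβ0 N)]
            have := (div_lt_iff₀ hε).mp hN
            linarith
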